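/- arXiv:2306.08559 — 2 statements merged into one kernel-verified Lean document; each statement's English description precedes it below -/
import Mathlib

section
/- Consider the model y = Xβ₀ + ε, X = ZΠ + η, where Z is a fixed real n×k matrix with ZᵀZ invertible, Π ∈ R^{k×p}, β₀ ∈ R^p, and the pairs (ε_{[g]}, η_{[g]}) are independent across clusters g with mean zero and finite second moments (arbitrary dependence within clusters). Let P = Z(ZᵀZ)^{-1}Zᵀ, M = I_n − P, assume each M_{[g,g]} invertible, and set P̃ = P − B_P·B_M^{-1}·M and P̈ = P − B_P. Let W = [y, X] (n×(1+p)) and let R = (β₀, I_p) be the p×(1+p) matrix whose first column is β₀ followed by the identity. Then E[Wᵀ·((P̃+P̃ᵀ)/2)·W] = Rᵀ Πᵀ Zᵀ Z Π R, E[Wᵀ P̈ W] = Rᵀ Πᵀ Zᵀ Z Π R − Rᵀ Πᵀ Zᵀ B_P Z Π R, and the difference Rᵀ Πᵀ Zᵀ B_P Z Π R is positive semidefinite. -/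
open Matrix MeasureTheory ProbabilityTheory BigOperators

/-- Index set of `n = n₁ + … + n_G` observations, grouped into `G` clusters. -/
abbrev ClusterIdx {G : ℕ} (ng : Fin G → ℕ) := Σ g : Fin G, Fin (ng g)

/-- The submatrix `A_{[g,h]}`: rows in cluster `g`, columns in cluster `h`. -/
def clusterSub {G : ℕ} {ng : Fin G → ℕ} (A : Matrix (ClusterIdx ng) (ClusterIdx ng) ℝ)
    (g h : Fin G) : Matrix (Fin (ng g)) (Fin (ng h)) ℝ :=
  Matrix.of fun i j => A ⟨g, i⟩ ⟨h, j⟩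

/-- The block-diagonal part `B_A` of a matrix. -/
def blockDiagPart {G : ℕ} {ng : Fin G → ℕ} (A : Matrix (ClusterIdx ng) (ClusterIdx ng) ℝ) :
    Matrix (ClusterIdx ng) (ClusterIdx ng) ℝ :=
  Matrix.of fun x y => if x.1 = y.1 then A x y else 0

/-- The cluster-`g` subvector `v_{[g]}` of a vector. -/
def clusterVec {G : ℕ} {ng : Fin G → ℕ} (v : ClusterIdx ng → ℝ) (g : Fin G) :
    Fin (ng g) → ℝ := fun i => v ⟨g, i⟩

/-- Entrywise expectation `E[Wᵀ A W]` of the random matrix `Wᵀ A W`. -/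
noncomputable def expQuadMatrix {Ω : Type*} [MeasurableSpace Ω] (μ : Measure Ω)
    {n m : Type*} [Fintype n] (W : Ω → Matrix n m ℝ) (A : Matrix n n ℝ) :
    Matrix m m ℝ :=
  Matrix.of fun c d => ∫ ω, ((W ω)ᵀ * A * W ω) c d ∂μ

lemma l2_integrable_mul {Ω : Type*} [MeasurableSpace Ω] {μ : Measure Ω} {f g : Ω → ℝ}
    (hf : MemLp f 2 μ) (hg : MemLp g 2 μ) : Integrable (fun ω => f ω * g ω) μ := by
  have h : MemLp (g • f) 1 μ := hf.smul hg
  rw [memLp_one_iff_integrable] at h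
  convert h using 1; funext ω; simp [mul_comm]

lemma bd_eq_blockDiagonal' {G : ℕ} {ng : Fin G → ℕ}
    (A : Matrix (ClusterIdx ng) (ClusterIdx ng) ℝ) :
    blockDiagPart A = Matrix.blockDiagonal' (fun g => clusterSub A g g) := by
  ext ⟨g, i⟩ ⟨h, j⟩
  by_cases hgh : g = h
  · subst hgh
    simp [blockDiagPart, Matrix.blockDiagonal'_apply_eq, clusterSub]
  · simp [blockDiagPart, Matrix.blockDiagonal'_apply_ne _ _ _ hgh, hgh]

lemma expQuad_core {Ω : Type*} [MeasurableSpace Ω] {μ : Measure Ω} [IsProbabilityMeasure μ]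
    {G : ℕ} {ng : Fin G → ℕ} {m : Type*} [Fintype m]
    (A : Matrix (ClusterIdx ng) (ClusterIdx ng) ℝ)
    (hA : ∀ x y : ClusterIdx ng, x.1 = y.1 → A x y = 0)
    (S : Matrix (ClusterIdx ng) m ℝ)
    (W : Ω → Matrix (ClusterIdx ng) m ℝ)
    (hmem : ∀ x c, MemLp (fun ω => W ω x c) 2 μ)
    (hmean : ∀ x c, ∫ ω, W ω x c ∂μ = S x c)
    (hind : ∀ (x y : ClusterIdx ng) (c d : m), x.1 ≠ y.1 →
      IndepFun (fun ω => W ω x c) (fun ω => W ω y d) μ) :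
    expQuadMatrix μ W A = Sᵀ * A * S := by
  ext c d
  have hint : ∀ x y : ClusterIdx ng,
      Integrable (fun ω => A x y * (W ω x c * W ω y d)) μ :=
    fun x y => (l2_integrable_mul (hmem x c) (hmem y d)).const_mul _
  have key : ∀ x y : ClusterIdx ng,
      ∫ ω, A x y * (W ω x c * W ω y d) ∂μ = A x y * (S x c * S y d) := by
    intro x y
    by_cases hxy : x.1 = y.1
    · simp [hA x y hxy]
    · rw [integral_const_mul]
      congr 1
      have := IndepFun.integral_mul_eq_mul_integral (hind x y c d hxy) (hmem x c).aestronglyMeasurable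
        (hmem y d).aestronglyMeasurable
      rw [← hmean x c, ← hmean y d, ← this]
      rfl
  have hentry : ∀ ω, ((W ω)ᵀ * A * W ω) c d
      = ∑ x : ClusterIdx ng, ∑ y : ClusterIdx ng, A x y * (W ω x c * W ω y d) := by
    intro ω
    simp only [Matrix.mul_apply, Matrix.transpose_apply, Finset.sum_mul]
    rw [Finset.sum_comm]
    exact Finset.sum_congr rfl fun x _ => Finset.sum_congr rfl fun y _ => by ring
  have : (∫ ω, ((W ω)ᵀ * A * W ω) c d ∂μ)
      = ∑ x : ClusterIdx ng, ∑ y : ClusterIdx ng, A x y * (S x c * S y d) := by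
    simp_rw [hentry]
    rw [integral_finset_sum _ (fun x _ => integrable_finset_sum _ (fun y _ => hint x y))]
    exact Finset.sum_congr rfl fun x _ => by
      rw [integral_finset_sum _ (fun y _ => hint x y)]
      exact Finset.sum_congr rfl fun y _ => key x y
  show (∫ ω, ((W ω)ᵀ * A * W ω) c d ∂μ) = _
  rw [this]
  simp only [Matrix.mul_apply, Matrix.transpose_apply, Finset.sum_mul]
  rw [Finset.sum_comm]
  exact Finset.sum_congr rfl fun x _ => Finset.sum_congr rfl fun y _ => by ring

lemma bd_inv {G : ℕ} {ng : Fin G → ℕ}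
    (M : Matrix (ClusterIdx ng) (ClusterIdx ng) ℝ)
    (hMgg : ∀ g : Fin G, IsUnit (clusterSub M g g)) :
    (blockDiagPart M)⁻¹ = Matrix.blockDiagonal' (fun g => (clusterSub M g g)⁻¹) := by
  apply Matrix.inv_eq_left_inv
  rw [bd_eq_blockDiagonal', ← Matrix.blockDiagonal'_mul]
  have : (fun g => (clusterSub M g g)⁻¹ * clusterSub M g g)
      = fun g => (1 : Matrix (Fin (ng g)) (Fin (ng g)) ℝ) := by
    funext g
    exact Matrix.nonsing_inv_mul _ ((Matrix.isUnit_iff_isUnit_det _).1 (hMgg g))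
  rw [this]
  exact Matrix.blockDiagonal'_one

lemma bd_mul_apply {G : ℕ} {ng : Fin G → ℕ}
    (c : ∀ g, Matrix (Fin (ng g)) (Fin (ng g)) ℝ)
    (M : Matrix (ClusterIdx ng) (ClusterIdx ng) ℝ) (g : Fin G) (i j : Fin (ng g)) :
    (Matrix.blockDiagonal' c * M) ⟨g, i⟩ ⟨g, j⟩ = (c g * clusterSub M g g) i j := by
  rw [Matrix.mul_apply, Matrix.mul_apply]
  rw [← Finset.univ_sigma_univ, Finset.sum_sigma]
  rw [Finset.sum_eq_single_of_mem g (Finset.mem_univ g)]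
  · exact Finset.sum_congr rfl fun l _ => by
      rw [Matrix.blockDiagonal'_apply_eq]; rfl
  · intro h _ hh
    apply Finset.sum_eq_zero
    intro l _
    rw [Matrix.blockDiagonal'_apply_ne _ _ _ (Ne.symm hh), zero_mul]

lemma ptilde_diag_zero {G : ℕ} {ng : Fin G → ℕ}
    (P M : Matrix (ClusterIdx ng) (ClusterIdx ng) ℝ)
    (hMgg : ∀ g : Fin G, IsUnit (clusterSub M g g)) (g : Fin G) (i j : Fin (ng g)) :
    (P - blockDiagPart P * (blockDiagPart M)⁻¹ * M) ⟨g, i⟩ ⟨g, j⟩ = 0 := by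
  have h1 : blockDiagPart P * (blockDiagPart M)⁻¹
      = Matrix.blockDiagonal' (fun g => clusterSub P g g * (clusterSub M g g)⁻¹) := by
    rw [bd_inv M hMgg, bd_eq_blockDiagonal' P, ← Matrix.blockDiagonal'_mul]
  rw [Matrix.sub_apply, h1, bd_mul_apply]
  have : clusterSub P g g * (clusterSub M g g)⁻¹ * clusterSub M g g = clusterSub P g g := by
    rw [Matrix.mul_assoc,
      Matrix.nonsing_inv_mul _ ((Matrix.isUnit_iff_isUnit_det _).1 (hMgg g)), Matrix.mul_one]
  rw [this]
  simp [clusterSub]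

lemma bd_posSemidef {G : ℕ} {ng : Fin G → ℕ}
    {P : Matrix (ClusterIdx ng) (ClusterIdx ng) ℝ} (hP : P.PosSemidef) :
    (blockDiagPart P).PosSemidef := by
  rw [Matrix.posSemidef_iff_dotProduct_mulVec]
  constructor
  · have hsym := hP.1
    ext x y
    have hPxy : P y x = P x y := by
      have h2 := congrFun (congrFun hsym x) y
      simpa [Matrix.conjTranspose_apply] using h2
    simp only [Matrix.conjTranspose_apply, blockDiagPart, Matrix.of_apply, star_trivial]
    by_cases h : x.1 = y.1
    · rw [if_pos h.symm, if_pos h, hPxy]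
    · rw [if_neg (fun hh => h hh.symm), if_neg h]
  · intro x
    have hrw : dotProduct (star x) (blockDiagPart P *ᵥ x)
        = ∑ g : Fin G, dotProduct (star (fun z : ClusterIdx ng => if z.1 = g then x z else 0))
            (P *ᵥ (fun z : ClusterIdx ng => if z.1 = g then x z else 0)) := by
      simp only [dotProduct, Matrix.mulVec, star_trivial, dotProduct]
      rw [Finset.sum_comm]
      apply Finset.sum_congr rfl
      intro a _
      simp only [Finset.mul_sum, Finset.sum_mul]
      rw [Finset.sum_comm]
      apply Finset.sum_congr rfl
      intro b _
      simp only [blockDiagPart, Matrix.of_apply, ite_mul, mul_ite, mul_zero, zero_mul]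
      rw [Finset.sum_ite_eq]
      by_cases h : a.1 = b.1 <;> simp [h]
    rw [hrw]
    exact Finset.sum_nonneg fun g _ => hP.dotProduct_mulVec_nonneg _

/-- the cluster symmetric jackknife keeps a larger signal, Section 3.3:
in the model `y = Xβ₀ + ε`, `X = ZΠ + η`, with `W = [y, X]` and `R = (β₀, I_p)`,
`E[Wᵀ ((P̃+P̃ᵀ)/2) W] = Rᵀ Πᵀ Zᵀ Z Π R`,
`E[Wᵀ P̈ W] = Rᵀ Πᵀ Zᵀ Z Π R − Rᵀ Πᵀ Zᵀ B_P Z Π R`, and `Rᵀ Πᵀ Zᵀ B_P Z Π R ⪰ 0`. -/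
theorem symmetric_cluster_jackknife_signal
    {Ω : Type*} [MeasurableSpace Ω] (μ : Measure Ω) [IsProbabilityMeasure μ]
    {G : ℕ} (ng : Fin G → ℕ) {k p : ℕ}
    (Z : Matrix (ClusterIdx ng) (Fin k) ℝ) (hZZ : IsUnit (Zᵀ * Z))
    (Pi0 : Matrix (Fin k) (Fin p) ℝ) (β₀ : Fin p → ℝ)
    (ε : Ω → ClusterIdx ng → ℝ) (η : Ω → ClusterIdx ng → Fin p → ℝ)
    (hmeasε : Measurable ε) (hmeasη : Measurable η)
    (hindep : iIndepFun
      (fun g ω => (clusterVec (ε ω) g, fun i : Fin (ng g) => η ω ⟨g, i⟩)) μ)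
    (hmeanε : ∀ x : ClusterIdx ng, ∫ ω, ε ω x ∂μ = 0)
    (hmeanη : ∀ (x : ClusterIdx ng) (j : Fin p), ∫ ω, η ω x j ∂μ = 0)
    (hmom2ε : ∀ x : ClusterIdx ng, Integrable (fun ω => (ε ω x) ^ 2) μ)
    (hmom2η : ∀ (x : ClusterIdx ng) (j : Fin p), Integrable (fun ω => (η ω x j) ^ 2) μ)
    -- the model `X = ZΠ + η`, `y = Xβ₀ + ε`
    (X : Ω → ClusterIdx ng → Fin p → ℝ)
    (hX : ∀ ω x j, X ω x j = (Z * Pi0) x j + η ω x j)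
    (y : Ω → ClusterIdx ng → ℝ)
    (hy : ∀ ω x, y ω x = (∑ j : Fin p, X ω x j * β₀ j) + ε ω x)
    -- `W = [y, X]` and `R = (β₀, I_p)`
    (W : Ω → Matrix (ClusterIdx ng) (Unit ⊕ Fin p) ℝ)
    (hW : ∀ ω, W ω = Matrix.of fun x c =>
      Sum.elim (fun _ : Unit => y ω x) (fun j : Fin p => X ω x j) c)
    (R : Matrix (Fin p) (Unit ⊕ Fin p) ℝ)
    (hR : R = Matrix.of fun i c =>
      Sum.elim (fun _ : Unit => β₀ i) (fun j : Fin p => if i = j then (1 : ℝ) else 0) c)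
    -- the projection matrices and the symmetric cluster jackknife matrix
    (P M : Matrix (ClusterIdx ng) (ClusterIdx ng) ℝ)
    (hP : P = Z * (Zᵀ * Z)⁻¹ * Zᵀ) (hM : M = 1 - P)
    (hMgg : ∀ g : Fin G, IsUnit (clusterSub M g g))
    (Ptilde : Matrix (ClusterIdx ng) (ClusterIdx ng) ℝ)
    (hPtilde : Ptilde = P - blockDiagPart P * (blockDiagPart M)⁻¹ * M) :
    expQuadMatrix μ W (((1 : ℝ) / 2) • (Ptilde + Ptildeᵀ)) =
      Rᵀ * Pi0ᵀ * Zᵀ * Z * Pi0 * R ∧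
    expQuadMatrix μ W (P - blockDiagPart P) =
      Rᵀ * Pi0ᵀ * Zᵀ * Z * Pi0 * R - Rᵀ * Pi0ᵀ * Zᵀ * blockDiagPart P * Z * Pi0 * R ∧
    (Rᵀ * Pi0ᵀ * Zᵀ * blockDiagPart P * Z * Pi0 * R).PosSemidef := by
  have hdet : IsUnit (Zᵀ * Z).det := (Matrix.isUnit_iff_isUnit_det _).1 hZZ
  have hPZ : P * Z = Z := by
    rw [hP, Matrix.mul_assoc, Matrix.mul_assoc, Matrix.nonsing_inv_mul _ hdet,
      Matrix.mul_one]
  have hMZ : M * Z = 0 := by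
    rw [hM, Matrix.sub_mul, Matrix.one_mul, hPZ, sub_self]
  have hPtZ : Ptilde * Z = Z := by
    rw [hPtilde, Matrix.sub_mul, hPZ, Matrix.mul_assoc, hMZ, Matrix.mul_zero, sub_zero]
  -- L2 membership
  have hε2 : ∀ x, MemLp (fun ω => ε ω x) 2 μ := fun x =>
    (memLp_two_iff_integrable_sq
      (((measurable_pi_apply x).comp hmeasε).aestronglyMeasurable)).2 (hmom2ε x)
  have hη2 : ∀ x j, MemLp (fun ω => η ω x j) 2 μ := fun x j =>
    (memLp_two_iff_integrable_sq (((measurable_pi_apply j).comp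
      ((measurable_pi_apply x).comp hmeasη)).aestronglyMeasurable)).2 (hmom2η x j)
  have hX2 : ∀ x j, MemLp (fun ω => X ω x j) 2 μ := by
    intro x j
    have he : (fun ω => X ω x j) = fun ω => (Z * Pi0) x j + η ω x j :=
      funext fun ω => hX ω x j
    rw [he]; exact (memLp_const ((Z * Pi0) x j)).add (hη2 x j)
  have hy2 : ∀ x, MemLp (fun ω => y ω x) 2 μ := by
    intro x
    have he : (fun ω => y ω x) = fun ω => (∑ j, X ω x j * β₀ j) + ε ω x :=
      funext fun ω => hy ω x
    rw [he]
    refine MemLp.add ?_ (hε2 x)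
    apply memLp_finset_sum
    intro j _
    have := (hX2 x j).const_mul (β₀ j)
    simpa [mul_comm] using this
  have hmemW : ∀ (x : ClusterIdx ng) (c : Unit ⊕ Fin p), MemLp (fun ω => W ω x c) 2 μ := by
    intro x c
    cases c with
    | inl u =>
        have he : (fun ω => W ω x (Sum.inl u)) = fun ω => y ω x :=
          funext fun ω => by rw [hW]; rfl
        rw [he]; exact hy2 x
    | inr j =>
        have he : (fun ω => W ω x (Sum.inr j)) = fun ω => X ω x j :=
          funext fun ω => by rw [hW]; rfl
        rw [he]; exact hX2 x j
  -- means
  have hεint : ∀ x, Integrable (fun ω => ε ω x) μ := fun x => (hε2 x).integrable one_le_two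
  have hηint : ∀ x j, Integrable (fun ω => η ω x j) μ := fun x j =>
    (hη2 x j).integrable one_le_two
  have hXint : ∀ x j, Integrable (fun ω => X ω x j) μ := fun x j =>
    (hX2 x j).integrable one_le_two
  have hmeanX : ∀ x j, ∫ ω, X ω x j ∂μ = (Z * Pi0) x j := by
    intro x j
    have he : (fun ω => X ω x j) = fun ω => (Z * Pi0) x j + η ω x j :=
      funext fun ω => hX ω x j
    rw [he, integral_add (integrable_const _) (hηint x j), integral_const, hmeanη x j]
    simp
  have hmeany : ∀ x, ∫ ω, y ω x ∂μ = ∑ j, (Z * Pi0) x j * β₀ j := by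
    intro x
    have he : (fun ω => y ω x) = fun ω => (∑ j, X ω x j * β₀ j) + ε ω x :=
      funext fun ω => hy ω x
    rw [he, integral_add (integrable_finset_sum _ fun j _ => (hXint x j).mul_const _) (hεint x),
      hmeanε x, add_zero, integral_finset_sum _ fun j _ => (hXint x j).mul_const _]
    exact Finset.sum_congr rfl fun j _ => by rw [integral_mul_const, hmeanX x j]
  have hmeanW : ∀ (x : ClusterIdx ng) (c : Unit ⊕ Fin p),
      ∫ ω, W ω x c ∂μ = (Z * Pi0 * R) x c := by
    intro x c
    cases c with
    | inl u =>
        have he : (fun ω => W ω x (Sum.inl u)) = fun ω => y ω x :=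
          funext fun ω => by rw [hW]; rfl
        rw [he, hmeany x]
        simp [Matrix.mul_apply, hR]
    | inr j =>
        have he : (fun ω => W ω x (Sum.inr j)) = fun ω => X ω x j :=
          funext fun ω => by rw [hW]; rfl
        rw [he, hmeanX x j]
        simp [Matrix.mul_apply, hR]
  -- independence
  have hindW : ∀ (x x' : ClusterIdx ng) (c d : Unit ⊕ Fin p), x.1 ≠ x'.1 →
      IndepFun (fun ω => W ω x c) (fun ω => W ω x' d) μ := by
    have key : ∀ (g : Fin G) (i : Fin (ng g)) (c : Unit ⊕ Fin p),
        ∃ φ : ((Fin (ng g) → ℝ) × (Fin (ng g) → Fin p → ℝ)) → ℝ, Measurable φ ∧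
          (fun ω => W ω ⟨g, i⟩ c)
            = φ ∘ (fun ω => (clusterVec (ε ω) g, fun i' : Fin (ng g) => η ω ⟨g, i'⟩)) := by
      intro g i c
      cases c with
      | inr j =>
          exact ⟨fun q => (Z * Pi0) ⟨g, i⟩ j + q.2 i j,
            measurable_const.add (measurable_snd.eval.eval),
            funext fun ω => by simp [hW, hX]⟩
      | inl u =>
          refine ⟨fun q => (∑ j, ((Z * Pi0) ⟨g, i⟩ j + q.2 i j) * β₀ j) + q.1 i, ?_, ?_⟩
          · refine Measurable.add ?_ measurable_fst.eval
            refine Finset.measurable_sum _ fun j _ => ?_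
            have h2 : Measurable fun q : (Fin (ng g) → ℝ) × (Fin (ng g) → Fin p → ℝ) =>
                q.2 i j := measurable_snd.eval.eval
            have h3 : Measurable fun q : (Fin (ng g) → ℝ) × (Fin (ng g) → Fin p → ℝ) =>
                ((Z * Pi0) ⟨g, i⟩ j + q.2 i j) * β₀ j :=
              (measurable_const.add h2).mul measurable_const
            exact h3
          · funext ω
            simp [hW, hy, hX, clusterVec]
    rintro ⟨g, i⟩ ⟨h, l⟩ c d hne
    obtain ⟨φ1, hm1, he1⟩ := key g i c
    obtain ⟨φ2, hm2, he2⟩ := key h l d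
    rw [he1, he2]
    exact (hindep.indepFun hne).comp hm1 hm2
  -- main computation
  have hmain : ∀ A, (∀ x x' : ClusterIdx ng, x.1 = x'.1 → A x x' = 0) →
      expQuadMatrix μ W A = (Z * Pi0 * R)ᵀ * A * (Z * Pi0 * R) :=
    fun A hA => expQuad_core A hA _ W hmemW hmeanW hindW
  have hsand : ∀ A : Matrix (ClusterIdx ng) (ClusterIdx ng) ℝ,
      (Z * Pi0 * R)ᵀ * A * (Z * Pi0 * R) = Rᵀ * Pi0ᵀ * (Zᵀ * A * Z) * Pi0 * R := by
    intro A
    simp [Matrix.transpose_mul, Matrix.mul_assoc]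
  -- P positive semidefinite
  have hQsym : ((Zᵀ * Z)⁻¹)ᵀ = (Zᵀ * Z)⁻¹ := by
    rw [Matrix.transpose_nonsing_inv, Matrix.transpose_mul, Matrix.transpose_transpose]
  have hPsym : Pᵀ = P := by
    simp [hP, Matrix.transpose_mul, hQsym, Matrix.mul_assoc]
  have hPP : P * P = P := by
    nth_rewrite 2 [hP]
    rw [← Matrix.mul_assoc, ← Matrix.mul_assoc, hPZ, ← hP]
  have hPsd : P.PosSemidef := by
    have hform : P = Pᵀ * P := by rw [hPsym, hPP]
    rw [hform]
    simpa [Matrix.conjTranspose_eq_transpose_of_trivial] using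
      Matrix.posSemidef_conjTranspose_mul_self P
  have hBP := bd_posSemidef hPsd
  refine ⟨?_, ?_, ?_⟩
  · -- part 1
    have hPtd : ∀ (g : Fin G) (i j : Fin (ng g)), Ptilde ⟨g, i⟩ ⟨g, j⟩ = 0 := by
      intro g i j
      rw [hPtilde]
      exact ptilde_diag_zero P M hMgg g i j
    have hA1diag : ∀ x x' : ClusterIdx ng, x.1 = x'.1 →
        (((1 : ℝ) / 2) • (Ptilde + Ptildeᵀ)) x x' = 0 := by
      rintro ⟨g, i⟩ ⟨h, j⟩ hxy
      obtain rfl : g = h := hxy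
      simp [Matrix.smul_apply, Matrix.add_apply, Matrix.transpose_apply, hPtd]
    have hZA1Z : Zᵀ * (((1 : ℝ) / 2) • (Ptilde + Ptildeᵀ)) * Z = Zᵀ * Z := by
      have ht : Zᵀ * Ptilde * Z = Zᵀ * Z := by rw [Matrix.mul_assoc, hPtZ]
      have ht2 : Zᵀ * Ptildeᵀ * Z = Zᵀ * Z := by
        have := congrArg Matrix.transpose ht
        simpa [Matrix.transpose_mul, Matrix.transpose_transpose, Matrix.mul_assoc] using this
      rw [Matrix.mul_smul, Matrix.smul_mul, Matrix.mul_add, Matrix.add_mul, ht, ht2,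
        ← two_smul ℝ (Zᵀ * Z), smul_smul]
      norm_num
    rw [hmain _ hA1diag, hsand, hZA1Z]
    simp [Matrix.mul_assoc]
  · -- part 2
    have hA2diag : ∀ x x' : ClusterIdx ng, x.1 = x'.1 →
        (P - blockDiagPart P) x x' = 0 := by
      intro x x' hxy
      simp [Matrix.sub_apply, blockDiagPart, hxy]
    rw [hmain _ hA2diag, hsand]
    have hZ2 : Zᵀ * (P - blockDiagPart P) * Z = Zᵀ * Z - Zᵀ * blockDiagPart P * Z := by
      rw [Matrix.mul_sub, Matrix.sub_mul]
      congr 1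
      rw [Matrix.mul_assoc, hPZ]
    rw [hZ2]
    simp [Matrix.mul_sub, Matrix.sub_mul, Matrix.mul_assoc]
  · -- part 3
    have h3 := hBP.conjTranspose_mul_mul_same (Z * Pi0 * R)
    have heq : (Z * Pi0 * R)ᴴ * blockDiagPart P * (Z * Pi0 * R)
        = Rᵀ * Pi0ᵀ * Zᵀ * blockDiagPart P * Z * Pi0 * R := by
      simp [Matrix.conjTranspose_eq_transpose_of_trivial, Matrix.transpose_mul,
        Matrix.mul_assoc]
    rwa [heq] at h3
end

section
/- Let P be a real symmetric idempotent n×n matrix, suppose the largest eigenvalue of every diagonal block P_{[g,g]} is at most C, and let n_max = max_g n_g. Then Σ_{g≠h} ( tr(P_{[g,h]} P_{[h,g]}) )² ≤ C·n_max·tr(P). -/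
open Matrix BigOperators

/-- Trace of a real Hermitian matrix equals the sum of its eigenvalues. -/
lemma trace_eq_sum_eig {m : Type*} [Fintype m] [DecidableEq m]
    {A : Matrix m m ℝ} (hA : A.IsHermitian) :
    A.trace = ∑ i, hA.eigenvalues i := by
  have h := hA.trace_eq_sum_eigenvalues
  simpa using h

/-- final bound in the Lyapunov step of the proof of Theorem 2:
if `P` is symmetric idempotent, every diagonal block `P_{[g,g]}` has all eigenvalues
at most `C`, and `n_max = max_g n_g`, then
`∑_{g≠h} (tr(P_{[g,h]} P_{[h,g]}))² ≤ C · n_max · tr(P)`. -/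
theorem sum_sq_offdiag_trace_le
    {G : ℕ} (ng : Fin G → ℕ)
    (P : Matrix (ClusterIdx ng) (ClusterIdx ng) ℝ)
    (hPsymm : P.IsSymm) (hPidem : P * P = P)
    (C : ℝ)
    (hblock : ∀ g : Fin G, (clusterSub P g g).IsHermitian)
    (hCbound : ∀ (g : Fin G) (i : Fin (ng g)), (hblock g).eigenvalues i ≤ C)
    (nmax : ℕ) (hnmax : nmax = Finset.univ.sup ng) :
    ∑ g : Fin G, ∑ h : Fin G, (if g = h then 0 else
        ((clusterSub P g h * clusterSub P h g).trace) ^ 2) ≤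
      C * (nmax : ℝ) * P.trace := by
  classical
  set t : Fin G → Fin G → ℝ := fun g h => (clusterSub P g h * clusterSub P h g).trace with ht
  -- each t g h is a sum of squares
  have htsq : ∀ g h, t g h = ∑ i, ∑ j, (P ⟨g, i⟩ ⟨h, j⟩) ^ 2 := by
    intro g h
    simp only [ht, Matrix.trace, Matrix.diag, Matrix.mul_apply, clusterSub, Matrix.of_apply]
    refine Finset.sum_congr rfl fun i _ => Finset.sum_congr rfl fun j _ => ?_
    rw [hPsymm.apply ⟨g, i⟩ ⟨h, j⟩, sq]
  have ht_nonneg : ∀ g h, 0 ≤ t g h := by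
    intro g h
    rw [htsq]
    positivity
  -- row sums equal diagonal block traces (idempotence)
  have hrow : ∀ g, (clusterSub P g g).trace = ∑ h, t g h := by
    intro g
    have key : ∀ i : Fin (ng g),
        P ⟨g, i⟩ ⟨g, i⟩ = ∑ h, ∑ j, P ⟨g, i⟩ ⟨h, j⟩ * P ⟨h, j⟩ ⟨g, i⟩ := by
      intro i
      conv_lhs => rw [← hPidem]
      rw [Matrix.mul_apply, ← Finset.univ_sigma_univ, Finset.sum_sigma]
    calc (clusterSub P g g).trace
        = ∑ i, P ⟨g, i⟩ ⟨g, i⟩ := rfl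
      _ = ∑ i, ∑ h, ∑ j, P ⟨g, i⟩ ⟨h, j⟩ * P ⟨h, j⟩ ⟨g, i⟩ :=
          Finset.sum_congr rfl fun i _ => key i
      _ = ∑ h, ∑ i, ∑ j, P ⟨g, i⟩ ⟨h, j⟩ * P ⟨h, j⟩ ⟨g, i⟩ := Finset.sum_comm
      _ = ∑ h, t g h := by
          refine Finset.sum_congr rfl fun h _ => ?_
          simp only [ht, Matrix.trace, Matrix.diag, Matrix.mul_apply, clusterSub,
            Matrix.of_apply]
  have hdiag_nonneg : ∀ g, 0 ≤ (clusterSub P g g).trace := by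
    intro g
    rw [hrow g]
    exact Finset.sum_nonneg fun h _ => ht_nonneg g h
  -- total trace is the sum of diagonal block traces
  have htot : P.trace = ∑ g, (clusterSub P g g).trace := by
    simp only [Matrix.trace, Matrix.diag]
    rw [← Finset.univ_sigma_univ, Finset.sum_sigma]
    rfl
  by_cases hzero : ∀ g, ng g = 0
  · -- degenerate case: everything is zero
    have hlhs : ∀ g h : Fin G, t g h = 0 := by
      intro g h
      rw [htsq]
      haveI : IsEmpty (Fin (ng g)) := by rw [hzero g]; infer_instance
      simp
    have hmax : nmax = 0 := by
      rw [hnmax]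
      simp [hzero]
    have htr : P.trace = 0 := by
      rw [htot]
      refine Finset.sum_eq_zero fun g _ => ?_
      rw [hrow g]
      exact Finset.sum_eq_zero fun h _ => hlhs g h
    have hlhs0 : ∀ g h : Fin G, (clusterSub P g h * clusterSub P h g).trace = 0 := hlhs
    rw [htr, hmax]
    simp [hlhs0]
  · push_neg at hzero
    obtain ⟨g₀, hg₀⟩ := hzero
    have hg₀' : 0 < ng g₀ := Nat.pos_of_ne_zero hg₀
    -- C is nonnegative
    have hC : 0 ≤ C := by
      have hne : (Finset.univ : Finset (Fin (ng g₀))).Nonempty := by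
        simpa [Finset.univ_nonempty_iff] using Fin.pos_iff_nonempty.mp hg₀'
      have hsum : (0 : ℝ) ≤ ∑ i, (hblock g₀).eigenvalues i := by
        rw [← trace_eq_sum_eig (hblock g₀)]
        exact hdiag_nonneg g₀
      obtain ⟨i, -, hi⟩ := Finset.exists_le_of_sum_le (f := fun _ => (0 : ℝ)) hne
        (by simpa using hsum)
      calc (0 : ℝ) ≤ (hblock g₀).eigenvalues i := hi
        _ ≤ C := hCbound g₀ i
    -- each diagonal block trace is at most C * nmax
    have hdiag_le : ∀ g, (clusterSub P g g).trace ≤ C * nmax := by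
      intro g
      rw [trace_eq_sum_eig (hblock g)]
      calc ∑ i, (hblock g).eigenvalues i ≤ ∑ _i : Fin (ng g), C :=
            Finset.sum_le_sum fun i _ => hCbound g i
        _ = (ng g : ℝ) * C := by simp [mul_comm]
        _ ≤ (nmax : ℝ) * C := by
            apply mul_le_mul_of_nonneg_right _ hC
            exact_mod_cast hnmax ▸ Finset.le_sup (Finset.mem_univ g)
        _ = C * nmax := mul_comm _ _
    have hCn : 0 ≤ C * (nmax : ℝ) := mul_nonneg hC (Nat.cast_nonneg _)
    -- termwise bound
    have hterm : ∀ g h : Fin G,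
        (if g = h then 0 else (t g h) ^ 2) ≤ C * (nmax : ℝ) * t g h := by
      intro g h
      split_ifs with hgh
      · exact mul_nonneg hCn (ht_nonneg g h)
      · have hle : t g h ≤ C * nmax := by
          calc t g h ≤ ∑ h', t g h' :=
              Finset.single_le_sum (fun h' _ => ht_nonneg g h') (Finset.mem_univ h)
            _ = (clusterSub P g g).trace := (hrow g).symm
            _ ≤ C * nmax := hdiag_le g
        calc (t g h) ^ 2 = t g h * t g h := sq (t g h) ▸ rfl
          _ ≤ (C * nmax) * t g h := mul_le_mul_of_nonneg_right hle (ht_nonneg g h)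
    calc ∑ g, ∑ h, (if g = h then 0 else (t g h) ^ 2)
        ≤ ∑ g, ∑ h, C * (nmax : ℝ) * t g h :=
          Finset.sum_le_sum fun g _ => Finset.sum_le_sum fun h _ => hterm g h
      _ = C * (nmax : ℝ) * ∑ g, ∑ h, t g h := by
          rw [Finset.mul_sum]
          exact Finset.sum_congr rfl fun g _ => (Finset.mul_sum _ _ _).symm
      _ = C * (nmax : ℝ) * P.trace := by
          rw [htot]
          congr 1
          exact Finset.sum_congr rfl fun g _ => (hrow g).symm
end
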